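/- Let G and H be finite groups and L ≤ G×H. Then k₁(N_{G×H}(L)) = C_G(k₁(L), p₁(L)) and k₂(N_{G×H}(L)) = C_H(k₂(L), p₂(L)). In particular, if U ≤ G, V ≤ H and α: V → U is a surjective homomorphism, then k₁(N_{G×H}(⊲(U,α,V))) = C_G(U) and k₂(N_{G×H}(⊲(U,α,V))) = C_H(ker(α), V); in particular C_H(V) is a normal subgroup of k₂(N_{G×H}(⊲(U,α,V))). -/

import Mathlib

lemma conj1 {G H : Type*} [Group G] [Group H] (g x : G) (y : H) :
    ((g, (1:H)) * (x, y) * (g, (1:H))⁻¹ : G × H) = (g * x * g⁻¹, y) := by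
  simp [Prod.ext_iff]

lemma k1_norm {G H : Type*} [Group G] [Group H] (L : Subgroup (G × H)) (g : G) :
    (g, (1:H)) ∈ Subgroup.normalizer (L : Set (G × H)) ↔
      g ∈ Subgroup.normalizer (L.comap (MonoidHom.inl G H) : Set G) ∧
      g ∈ Subgroup.normalizer (L.map (MonoidHom.fst G H) : Set G) ∧
      ∀ b ∈ L.map (MonoidHom.fst G H),
        g * b * g⁻¹ * b⁻¹ ∈ L.comap (MonoidHom.inl G H) := by
  rw [Subgroup.mem_normalizer_iff]
  have hg' : ∀ x y, ((g, (1:H)) * (x, y) * (g, (1:H))⁻¹ : G × H) = (g * x * g⁻¹, y) :=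
    conj1 g
  constructor
  · intro hg
    have hg2 : ∀ x y, ((x, y) : G × H) ∈ L ↔ (g * x * g⁻¹, y) ∈ L := by
      intro x y; rw [hg (x, y), hg']
    refine ⟨?_, ?_, ?_⟩
    · rw [Subgroup.mem_normalizer_iff]
      intro a
      simpa [Subgroup.mem_comap] using hg2 a 1
    · rw [Subgroup.mem_normalizer_iff]
      intro b
      simp only [Subgroup.mem_map]
      constructor
      · rintro ⟨⟨x, y⟩, hxy, rfl⟩
        exact ⟨(g * x * g⁻¹, y), (hg2 x y).mp hxy, rfl⟩
      · rintro ⟨⟨x, y⟩, hxy, hb⟩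
        simp only [MonoidHom.coe_fst] at hb
        refine ⟨(g⁻¹ * x * g, y), (hg2 _ _).mpr ?_, ?_⟩
        · have : g * (g⁻¹ * x * g) * g⁻¹ = x := by group
          rw [this]; exact hxy
        · simp only [MonoidHom.coe_fst]
          subst hb; group
    · rintro b ⟨⟨x, y⟩, hxy, rfl⟩
      have h1 : (g * x * g⁻¹, y) ∈ L := (hg2 x y).mp hxy
      have h2 := L.mul_mem h1 (L.inv_mem hxy)
      have : ((g * x * g⁻¹, y) * (x, y)⁻¹ : G × H)
          = (g * x * g⁻¹ * x⁻¹, 1) := by simp [Prod.ext_iff]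
      rw [this] at h2
      simpa [Subgroup.mem_comap, MonoidHom.coe_fst] using h2
  · rintro ⟨h1, h2, h3⟩ ⟨x, y⟩
    rw [hg']
    constructor
    · intro hxy
      have hb : x ∈ L.map (MonoidHom.fst G H) := ⟨(x, y), hxy, rfl⟩
      have hc : ((g * x * g⁻¹ * x⁻¹, (1:H)) : G × H) ∈ L := h3 x hb
      have h4 := L.mul_mem hc hxy
      have : ((g * x * g⁻¹ * x⁻¹, (1:H)) * (x, y) : G × H) = (g * x * g⁻¹, y) := by
        simp [Prod.ext_iff, mul_assoc]
      rwa [this] at h4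
    · intro hxy
      have hb : g * x * g⁻¹ ∈ L.map (MonoidHom.fst G H) := ⟨_, hxy, rfl⟩
      have hx : x ∈ L.map (MonoidHom.fst G H) :=
        (Subgroup.mem_normalizer_iff.mp h2 x).mpr hb
      have hc : ((g * x * g⁻¹ * x⁻¹, (1:H)) : G × H) ∈ L := h3 x hx
      have h4 := L.mul_mem (L.inv_mem hc) hxy
      have : (((g * x * g⁻¹ * x⁻¹, (1:H)) : G × H)⁻¹ * (g * x * g⁻¹, y) : G × H)
          = (x, y) := by
        simp [Prod.ext_iff]; group
      rwa [this] at h4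

lemma conj2 {G H : Type*} [Group G] [Group H] (h : H) (x : G) (y : H) :
    (((1:G), h) * (x, y) * ((1:G), h)⁻¹ : G × H) = (x, h * y * h⁻¹) := by
  simp [Prod.ext_iff]

lemma k2_norm {G H : Type*} [Group G] [Group H] (L : Subgroup (G × H)) (h : H) :
    ((1:G), h) ∈ Subgroup.normalizer (L : Set (G × H)) ↔
      h ∈ Subgroup.normalizer (L.comap (MonoidHom.inr G H) : Set H) ∧
      h ∈ Subgroup.normalizer (L.map (MonoidHom.snd G H) : Set H) ∧
      ∀ b ∈ L.map (MonoidHom.snd G H),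
        h * b * h⁻¹ * b⁻¹ ∈ L.comap (MonoidHom.inr G H) := by
  rw [Subgroup.mem_normalizer_iff]
  have hg' : ∀ x y, (((1:G), h) * (x, y) * ((1:G), h)⁻¹ : G × H) = (x, h * y * h⁻¹) :=
    conj2 h
  constructor
  · intro hg
    have hg2 : ∀ x y, ((x, y) : G × H) ∈ L ↔ (x, h * y * h⁻¹) ∈ L := by
      intro x y; rw [hg (x, y), hg']
    refine ⟨?_, ?_, ?_⟩
    · rw [Subgroup.mem_normalizer_iff]
      intro a
      simpa [Subgroup.mem_comap] using hg2 1 a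
    · rw [Subgroup.mem_normalizer_iff]
      intro b
      simp only [Subgroup.mem_map]
      constructor
      · rintro ⟨⟨x, y⟩, hxy, rfl⟩
        exact ⟨(x, h * y * h⁻¹), (hg2 x y).mp hxy, rfl⟩
      · rintro ⟨⟨x, y⟩, hxy, hb⟩
        simp only [MonoidHom.coe_snd] at hb
        refine ⟨(x, h⁻¹ * y * h), (hg2 _ _).mpr ?_, ?_⟩
        · have : h * (h⁻¹ * y * h) * h⁻¹ = y := by group
          rw [this]; exact hxy
        · simp only [MonoidHom.coe_snd]
          subst hb; group
    · rintro b ⟨⟨x, y⟩, hxy, rfl⟩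
      have h1 : (x, h * y * h⁻¹) ∈ L := (hg2 x y).mp hxy
      have h2 := L.mul_mem h1 (L.inv_mem hxy)
      have : ((x, h * y * h⁻¹) * (x, y)⁻¹ : G × H)
          = (1, h * y * h⁻¹ * y⁻¹) := by simp [Prod.ext_iff]
      rw [this] at h2
      simpa [Subgroup.mem_comap, MonoidHom.coe_snd] using h2
  · rintro ⟨h1, h2, h3⟩ ⟨x, y⟩
    rw [hg']
    constructor
    · intro hxy
      have hb : y ∈ L.map (MonoidHom.snd G H) := ⟨(x, y), hxy, rfl⟩
      have hc : (((1:G), h * y * h⁻¹ * y⁻¹) : G × H) ∈ L := h3 y hb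
      have h4 := L.mul_mem hc hxy
      have : ((((1:G), h * y * h⁻¹ * y⁻¹) : G × H) * (x, y) : G × H)
          = (x, h * y * h⁻¹) := by
        simp [Prod.ext_iff, mul_assoc]
      rwa [this] at h4
    · intro hxy
      have hb : h * y * h⁻¹ ∈ L.map (MonoidHom.snd G H) := ⟨_, hxy, rfl⟩
      have hx : y ∈ L.map (MonoidHom.snd G H) :=
        (Subgroup.mem_normalizer_iff.mp h2 y).mpr hb
      have hc : (((1:G), h * y * h⁻¹ * y⁻¹) : G × H) ∈ L := h3 y hx
      have h4 := L.mul_mem (L.inv_mem hc) hxy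
      have : ((((1:G), h * y * h⁻¹ * y⁻¹) : G × H)⁻¹ * (x, h * y * h⁻¹) : G × H)
          = (x, y) := by
        simp [Prod.ext_iff]; group
      rwa [this] at h4

lemma k1_set {G H : Type*} [Group G] [Group H] (L : Subgroup (G × H)) :
    ((Subgroup.normalizer (L : Set (G × H))).comap (MonoidHom.inl G H) : Set G) =
      {g : G | g ∈ Subgroup.normalizer (L.comap (MonoidHom.inl G H) : Set G) ∧
        g ∈ Subgroup.normalizer (L.map (MonoidHom.fst G H) : Set G) ∧
        ∀ b ∈ L.map (MonoidHom.fst G H),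
          g * b * g⁻¹ * b⁻¹ ∈ L.comap (MonoidHom.inl G H)} := by
  ext g
  simp only [SetLike.mem_coe, Subgroup.mem_comap, MonoidHom.inl_apply, Set.mem_setOf_eq]
  exact k1_norm L g

lemma k2_set {G H : Type*} [Group G] [Group H] (L : Subgroup (G × H)) :
    ((Subgroup.normalizer (L : Set (G × H))).comap (MonoidHom.inr G H) : Set H) =
      {h : H | h ∈ Subgroup.normalizer (L.comap (MonoidHom.inr G H) : Set H) ∧
        h ∈ Subgroup.normalizer (L.map (MonoidHom.snd G H) : Set H) ∧
        ∀ b ∈ L.map (MonoidHom.snd G H),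
          h * b * h⁻¹ * b⁻¹ ∈ L.comap (MonoidHom.inr G H)} := by
  ext h
  simp only [SetLike.mem_coe, Subgroup.mem_comap, MonoidHom.inr_apply, Set.mem_setOf_eq]
  exact k2_norm L h

theorem stmt2 {G H : Type*} [Group G] [Group H] [Finite G] [Finite H]
    (L : Subgroup (G × H)) (U : Subgroup G) (V : Subgroup H)
    (α : ↥V →* G) (hα : α.range = U) :
    -- general statement, i = 1
    (((Subgroup.normalizer (L : Set (G × H))).comap (MonoidHom.inl G H) : Set G) =
      {g : G | g ∈ Subgroup.normalizer (L.comap (MonoidHom.inl G H) : Set G) ∧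
        g ∈ Subgroup.normalizer (L.map (MonoidHom.fst G H) : Set G) ∧
        ∀ b ∈ L.map (MonoidHom.fst G H),
          g * b * g⁻¹ * b⁻¹ ∈ L.comap (MonoidHom.inl G H)}) ∧
    -- general statement, i = 2
    (((Subgroup.normalizer (L : Set (G × H))).comap (MonoidHom.inr G H) : Set H) =
      {h : H | h ∈ Subgroup.normalizer (L.comap (MonoidHom.inr G H) : Set H) ∧
        h ∈ Subgroup.normalizer (L.map (MonoidHom.snd G H) : Set H) ∧
        ∀ b ∈ L.map (MonoidHom.snd G H),
          h * b * h⁻¹ * b⁻¹ ∈ L.comap (MonoidHom.inr G H)}) ∧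
    -- particular case: k₁(N(⊲(U,α,V))) = C_G(U)
    ((Subgroup.normalizer ((α.prod V.subtype).range : Set (G × H))).comap (MonoidHom.inl G H) =
      Subgroup.centralizer (U : Set G)) ∧
    -- particular case: k₂(N(⊲(U,α,V))) = C_H(ker α, V)
    (((Subgroup.normalizer ((α.prod V.subtype).range : Set (G × H))).comap (MonoidHom.inr G H) : Set H) =
      {h : H | h ∈ Subgroup.normalizer (α.ker.map V.subtype : Set H) ∧ h ∈ Subgroup.normalizer (V : Set H) ∧
        ∀ v ∈ V, h * v * h⁻¹ * v⁻¹ ∈ α.ker.map V.subtype}) ∧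
    -- C_H(V) ⊴ k₂(N(⊲(U,α,V)))
    (Subgroup.centralizer (V : Set H) ≤
        (Subgroup.normalizer ((α.prod V.subtype).range : Set (G × H))).comap (MonoidHom.inr G H) ∧
      ((Subgroup.centralizer (V : Set H)).subgroupOf
        ((Subgroup.normalizer ((α.prod V.subtype).range : Set (G × H))).comap (MonoidHom.inr G H))).Normal) := by
  set R : Subgroup (G × H) := (α.prod V.subtype).range with hR
  have memR : ∀ x : G, ∀ y : H, ((x, y) ∈ R ↔ ∃ v : V, α v = x ∧ (v : H) = y) := by
    intro x y
    constructor
    · rintro ⟨v, hv⟩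
      rw [MonoidHom.prod_apply, Prod.ext_iff] at hv
      exact ⟨v, hv.1, hv.2⟩
    · rintro ⟨v, h1, h2⟩
      exact ⟨v, by rw [MonoidHom.prod_apply, Prod.ext_iff]; exact ⟨h1, h2⟩⟩
  -- e1 : k₂(R) = map of ker α
  have e1 : R.comap (MonoidHom.inr G H) = α.ker.map V.subtype := by
    ext x
    simp only [Subgroup.mem_comap, MonoidHom.inr_apply, Subgroup.mem_map,
      Subgroup.coe_subtype, MonoidHom.mem_ker]
    rw [memR]
  -- e2 : p₂(R) = V
  have e2 : R.map (MonoidHom.snd G H) = V := by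
    ext y
    simp only [Subgroup.mem_map]
    constructor
    · rintro ⟨⟨x, y'⟩, hxy, rfl⟩
      obtain ⟨v, _, hv2⟩ := (memR x y').mp hxy
      simp only [← hv2]; exact v.2
    · intro hy
      exact ⟨(α ⟨y, hy⟩, y), (memR _ _).mpr ⟨⟨y, hy⟩, rfl, rfl⟩, rfl⟩
  have part4 : (((Subgroup.normalizer (R : Set (G × H))).comap (MonoidHom.inr G H) : Set H) =
      {h : H | h ∈ Subgroup.normalizer (α.ker.map V.subtype : Set H) ∧ h ∈ Subgroup.normalizer (V : Set H) ∧
        ∀ v ∈ V, h * v * h⁻¹ * v⁻¹ ∈ α.ker.map V.subtype}) := by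
    rw [k2_set R, e1, e2]
  have part3 : (Subgroup.normalizer (R : Set (G × H))).comap (MonoidHom.inl G H) =
      Subgroup.centralizer (U : Set G) := by
    ext g
    simp only [Subgroup.mem_comap, MonoidHom.inl_apply]
    rw [Subgroup.mem_normalizer_iff, Subgroup.mem_centralizer_iff]
    constructor
    · intro hg u hu
      rw [← hα] at hu
      obtain ⟨v, rfl⟩ := hu
      have h1 : ((α v, (v : H)) : G × H) ∈ R := (memR _ _).mpr ⟨v, rfl, rfl⟩
      have h2 := (hg _).mp h1
      rw [conj1] at h2
      obtain ⟨v', hv1, hv2⟩ := (memR _ _).mp h2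
      have hvv : v' = v := Subtype.ext hv2
      subst hvv
      conv_lhs => rw [hv1]
      group
    · intro hg ⟨x, y⟩
      rw [conj1]
      have key : ∀ w : V, g * (α w) * g⁻¹ = α w := by
        intro w
        have : α w ∈ (U : Set G) := by rw [← hα]; exact ⟨w, rfl⟩
        have := hg _ this
        rw [← this]; group
      constructor
      · intro hxy
        obtain ⟨v, hv1, hv2⟩ := (memR _ _).mp hxy
        refine (memR _ _).mpr ⟨v, ?_, hv2⟩
        rw [← hv1, key]
      · intro hxy
        obtain ⟨v, hv1, hv2⟩ := (memR _ _).mp hxy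
        refine (memR _ _).mpr ⟨v, ?_, hv2⟩
        have hx : x = g⁻¹ * (α v) * g := by rw [hv1]; group
        rw [hx]
        conv_rhs => rw [← key v]
        group
  have part5a : Subgroup.centralizer (V : Set H) ≤
      (Subgroup.normalizer (R : Set (G × H))).comap (MonoidHom.inr G H) := by
    intro c hc
    rw [Subgroup.mem_centralizer_iff] at hc
    simp only [Subgroup.mem_comap, MonoidHom.inr_apply]
    rw [Subgroup.mem_normalizer_iff]
    rintro ⟨x, y⟩
    rw [conj2]
    have key : ∀ w : V, c * (w : H) * c⁻¹ = (w : H) := by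
      intro w
      have := hc _ w.2
      rw [← this]; group
    constructor
    · intro hxy
      obtain ⟨v, hv1, hv2⟩ := (memR _ _).mp hxy
      refine (memR _ _).mpr ⟨v, hv1, ?_⟩
      rw [← hv2, key]
    · intro hxy
      obtain ⟨v, hv1, hv2⟩ := (memR _ _).mp hxy
      refine (memR _ _).mpr ⟨v, hv1, ?_⟩
      have hy : y = c⁻¹ * (v : H) * c := by rw [hv2]; group
      rw [hy]
      conv_rhs => rw [← key v]
      group
  refine ⟨k1_set L, k2_set L, part3, part4, part5a, ?_⟩
  constructor
  intro n hn g
  rw [Subgroup.mem_subgroupOf] at hn ⊢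
  rw [Subgroup.mem_centralizer_iff] at hn ⊢
  have hgV : (g : H) ∈ Subgroup.normalizer (V : Set H) := by
    have hgK : (g : H) ∈ ({h : H | h ∈ Subgroup.normalizer (α.ker.map V.subtype : Set H) ∧
        h ∈ Subgroup.normalizer (V : Set H) ∧ ∀ v ∈ V, h * v * h⁻¹ * v⁻¹ ∈ α.ker.map V.subtype}) := by
      rw [← part4]; exact g.2
    exact hgK.2.1
  intro v hv
  have hv' : (g : H)⁻¹ * v * (g : H) ∈ V := by
    have := (Subgroup.mem_normalizer_iff.mp ((Subgroup.normalizer (V : Set H)).inv_mem hgV) v).mp hv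
    simpa using this
  have hc := hn _ hv'
  push_cast
  calc v * ((g : H) * (n : H) * (g : H)⁻¹)
      = (g : H) * (((g : H)⁻¹ * v * (g : H)) * (n : H)) * (g : H)⁻¹ := by group
    _ = (g : H) * ((n : H) * ((g : H)⁻¹ * v * (g : H))) * (g : H)⁻¹ := by rw [hc]
    _ = (g : H) * (n : H) * (g : H)⁻¹ * v := by group
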